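/- Let f, m ≥ 1 be natural numbers and let w = (w_1,...,w_f) ∈ Row(f,m). For each j with 1 ≤ j ≤ m, let a_j := k − 1, where k is the unique index with w_1 + ... + w_{k−1} < j ≤ w_1 + ... + w_k. Then the vector μ := (f − a_m + a_1, a_2 − a_1, a_3 − a_2, ..., a_m − a_{m−1}) has all entries nonnegative, lies in Row(m,f), and satisfies ⟨μ⟩ = ⟨w⟩^c. -/

import Mathlib

/-- The list of positions of the nonzero entries of `w`. -/
def nzPos (w : List ℕ) : List ℕ :=
  (List.range w.length).filter (fun i => w.getD i 0 ≠ 0)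

/-- The pair sequence of `w`: each nonzero entry of `w` together with the cyclic
distance from its position to the next nonzero position. -/
def pairsOf (w : List ℕ) : List (ℕ × ℕ) :=
  (List.range (nzPos w).length).map (fun j =>
    (w.getD ((nzPos w).getD j 0) 0,
     if j + 1 = (nzPos w).length then (nzPos w).getD 0 0 + w.length - (nzPos w).getD j 0
     else (nzPos w).getD (j + 1) 0 - (nzPos w).getD j 0))

/-- The complemented pair sequence: `((a₀,b₀),...,(a_k,b_k)) ↦ ((b₀,a₁),(b₁,a₂),...,(b_k,a₀))`. -/
def complPairs (p : List (ℕ × ℕ)) : List (ℕ × ℕ) :=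
  (p.map Prod.snd).zip ((p.map Prod.fst).rotate 1)

/-- `v` is a complement of `w`: `v ∈ Row(t,s)` (where `w ∈ Row(s,t)`) and the pair sequence
of `v` is a cyclic permutation of the complemented pair sequence of `w`. -/
def IsComplementOf (w v : List ℕ) : Prop :=
  v.length = w.sum ∧ v.sum = w.length ∧ pairsOf v ~r complPairs (pairsOf w)

/-- For `1 ≤ j`, `aFn w j = k - 1` where `k` is the unique index with
`w₁ + ⋯ + w_{k-1} < j ≤ w₁ + ⋯ + w_k`; it is computed as the number of partial sums
`w₁ + ⋯ + w_{i+1}` (for `0 ≤ i < f`) that are `< j`. -/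
def aFn (w : List ℕ) (j : ℕ) : ℕ :=
  (List.range w.length).countP (fun i => (w.take (i + 1)).sum < j)

namespace MuCompl

def F (w : List ℕ) (x : ℕ) : ℕ := ∑ i ∈ Finset.range x, w.getD i 0

lemma take_sum_eq (w : List ℕ) (x : ℕ) : (w.take x).sum = F w x := by
  induction x with
  | zero => simp [F]
  | succ n ih =>
    rw [List.take_succ, List.sum_append, ih, F, F, Finset.sum_range_succ]
    congr 1
    cases h : w[n]? with
    | none => simp [List.getD, h]
    | some v => simp [List.getD, h]

lemma F_mono (w : List ℕ) : Monotone (F w) := fun _ _ h =>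
  Finset.sum_le_sum_of_subset (Finset.range_subset_range.mpr h)

lemma F_succ (w : List ℕ) (x : ℕ) : F w (x + 1) = F w x + w.getD x 0 :=
  Finset.sum_range_succ _ _

lemma F_length (w : List ℕ) : F w w.length = w.sum := by
  rw [← take_sum_eq, List.take_length]

lemma F_zero_interval (w : List ℕ) {x y : ℕ} (hxy : x ≤ y)
    (h : ∀ i, x ≤ i → i < y → w.getD i 0 = 0) : F w y = F w x := by
  unfold F
  have hsplit : ∑ i ∈ Finset.Ico 0 x, w.getD i 0 + ∑ i ∈ Finset.Ico x y, w.getD i 0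
      = ∑ i ∈ Finset.Ico 0 y, w.getD i 0 :=
    Finset.sum_Ico_consecutive _ (Nat.zero_le x) hxy
  rw [Finset.range_eq_Ico, Finset.range_eq_Ico]
  have : ∑ i ∈ Finset.Ico x y, w.getD i 0 = 0 := by
    apply Finset.sum_eq_zero
    intro i hi
    rw [Finset.mem_Ico] at hi
    exact h i hi.1 hi.2
  omega

lemma aFn_eq (w : List ℕ) (j : ℕ) :
    aFn w j = (List.range w.length).countP (fun i => decide (F w (i + 1) < j)) := by
  apply List.countP_congr
  intro i _
  simp [take_sum_eq]

lemma cnt (p : ℕ → Prop) [DecidablePred p] (hp : ∀ i, p (i + 1) → p i) :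
    ∀ n i, i < n → (p i ↔ i < (List.range n).countP (fun a => decide (p a))) := by
  have down : ∀ j i, i ≤ j → p j → p i := by
    intro j
    induction j with
    | zero => intro i h pj; rcases Nat.le_zero.mp h; exact pj
    | succ n ih =>
      intro i h pj
      rcases Nat.lt_or_ge i (n + 1) with h' | h'
      · exact ih i (by omega) (hp n pj)
      · have : i = n + 1 := by omega
        rwa [this]
  intro n
  induction n with
  | zero => intro i hi; omega
  | succ n ih =>
    intro i hi
    rw [List.range_succ, List.countP_append]
    by_cases hpn : p n
    · have hall : (List.range n).countP (fun a => decide (p a)) = n := by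
        rw [List.countP_eq_length.mpr, List.length_range]
        intro a ha
        rw [List.mem_range] at ha
        exact decide_eq_true (down n a (by omega) hpn)
      have h1 : List.countP (fun a => decide (p a)) [n] = 1 := by
        simp [List.countP_cons, hpn]
      rw [hall, h1]
      constructor
      · intro _; omega
      · intro _; exact down n i (by omega) hpn
    · have h1 : List.countP (fun a => decide (p a)) [n] = 0 := by
        simp [List.countP_cons, hpn]
      have hle : (List.range n).countP (fun a => decide (p a)) ≤ n := by
        have := List.countP_le_length (l := List.range n) (p := fun a => decide (p a))
        simpa using this
      rw [h1]
      rcases Nat.lt_or_ge i n with h' | h'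
      · rw [ih i h']; omega
      · have : i = n := by omega
        subst this
        constructor
        · intro h; exact absurd h hpn
        · intro h; omega

lemma aFn_spec (w : List ℕ) (j : ℕ) (hj : 1 ≤ j) (hjm : j ≤ w.sum) (hw : 1 ≤ w.length) :
    aFn w j < w.length ∧ F w (aFn w j) < j ∧ j ≤ F w (aFn w j + 1) ∧
      w.getD (aFn w j) 0 ≠ 0 := by
  have hp : ∀ i, F w (i + 1 + 1) < j → F w (i + 1) < j := fun i h =>
    lt_of_le_of_lt (F_mono w (by omega)) h
  have key := cnt (fun i => F w (i + 1) < j) hp w.length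
  rw [aFn_eq]
  set c := (List.range w.length).countP (fun i => decide (F w (i + 1) < j)) with hc
  have hlast : ¬ F w (w.length - 1 + 1) < j := by
    have : w.length - 1 + 1 = w.length := by omega
    rw [this, F_length]; omega
  have hcf : c < w.length := by
    have := key (w.length - 1) (by omega)
    omega
  have hnc : ¬ F w (c + 1) < j := by
    have := key c hcf
    omega
  have hFc : F w c < j := by
    rcases Nat.eq_zero_or_pos c with h0 | h0
    · rw [h0]; simp [F]; omega
    · have := key (c - 1) (by omega)
      have : F w (c - 1 + 1) < j := this.mpr (by omega)
      have hcc : c - 1 + 1 = c := by omega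
      rwa [hcc] at this
  refine ⟨hcf, hFc, by omega, ?_⟩
  intro h0
  rw [F_succ, h0] at hnc
  omega

lemma aFn_eq_of (w : List ℕ) (j i0 : ℕ) (h0 : i0 < w.length)
    (h1 : F w i0 < j) (h2 : j ≤ F w (i0 + 1)) : aFn w j = i0 := by
  have hp : ∀ i, F w (i + 1 + 1) < j → F w (i + 1) < j := fun i h =>
    lt_of_le_of_lt (F_mono w (by omega)) h
  have key := cnt (fun i => F w (i + 1) < j) hp w.length
  rw [aFn_eq]
  set c := (List.range w.length).countP (fun i => decide (F w (i + 1) < j)) with hc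
  have hni0 : ¬ F w (i0 + 1) < j := by omega
  have hci0 : ¬ (i0 < c) := by
    have := key i0 h0
    omega
  by_contra hne
  have hclt : c < i0 := by omega
  have : F w (c + 1) < j := lt_of_le_of_lt (F_mono w (by omega)) h1
  have := (key c (by omega)).mp this
  omega

lemma aFn_mono (w : List ℕ) {j j' : ℕ} (h : j ≤ j') : aFn w j ≤ aFn w j' := by
  unfold aFn
  apply List.countP_mono_left
  intro i _
  simp only [decide_eq_true_eq]
  omega


def Q (w : List ℕ) (t : ℕ) : ℕ := (nzPos w).getD t 0

def Sv (w : List ℕ) (t : ℕ) : ℕ := F w (Q w t + 1)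

def K (w : List ℕ) : ℕ := (nzPos w).length

lemma mem_nzPos {w : List ℕ} {i : ℕ} :
    i ∈ nzPos w ↔ i < w.length ∧ w.getD i 0 ≠ 0 := by
  simp [nzPos, List.mem_filter, List.mem_range]

lemma nzPos_pairwise (w : List ℕ) : (nzPos w).Pairwise (· < ·) :=
  (List.pairwise_lt_range).filter _

lemma K_pos {w : List ℕ} (hw : w.sum ≠ 0) : 1 ≤ K w := by
  by_contra h
  have hK : nzPos w = [] := List.length_eq_zero_iff.mp (by unfold K at h; omega)
  have hz : ∀ i, 0 ≤ i → i < w.length → w.getD i 0 = 0 := by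
    intro i _ hi
    by_contra hnz
    have : i ∈ nzPos w := mem_nzPos.mpr ⟨hi, hnz⟩
    rw [hK] at this
    exact absurd this List.not_mem_nil
  have := F_zero_interval w (Nat.zero_le _) hz
  rw [F_length] at this
  simp [F] at this
  exact hw this

lemma Q_mono {w : List ℕ} {s t : ℕ} (hst : s < t) (ht : t < K w) : Q w s < Q w t := by
  have hs : s < (nzPos w).length := by unfold K at ht; omega
  have ht' : t < (nzPos w).length := ht
  have := List.pairwise_iff_getElem.mp (nzPos_pairwise w) s t hs ht' hst
  unfold Q
  rwa [List.getD_eq_getElem _ _ hs, List.getD_eq_getElem _ _ ht']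

lemma Q_mono_le {w : List ℕ} {s t : ℕ} (hst : s ≤ t) (ht : t < K w) : Q w s ≤ Q w t := by
  rcases Nat.lt_or_ge s t with h | h
  · exact le_of_lt (Q_mono h ht)
  · have : s = t := by omega
    rw [this]

lemma Q_mem {w : List ℕ} {t : ℕ} (ht : t < K w) : Q w t ∈ nzPos w := by
  unfold Q
  rw [List.getD_eq_getElem _ _ ht]
  exact List.getElem_mem _

lemma Q_lt_len {w : List ℕ} {t : ℕ} (ht : t < K w) : Q w t < w.length :=
  (mem_nzPos.mp (Q_mem ht)).1

lemma Q_nz {w : List ℕ} {t : ℕ} (ht : t < K w) : w.getD (Q w t) 0 ≠ 0 :=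
  (mem_nzPos.mp (Q_mem ht)).2

lemma mem_nzPos_idx {w : List ℕ} {i : ℕ} (h : i ∈ nzPos w) :
    ∃ t, t < K w ∧ Q w t = i := by
  obtain ⟨t, ht, hQt⟩ := List.getElem_of_mem h
  exact ⟨t, ht, by rw [Q, List.getD_eq_getElem _ _ ht, hQt]⟩

lemma F_gap {w : List ℕ} {x y : ℕ} (hxy : x ≤ y) (hy : y ≤ w.length)
    (h : ∀ i, x ≤ i → i < y → i ∉ nzPos w) : F w y = F w x := by
  apply F_zero_interval w hxy
  intro i hxi hiy
  by_contra hnz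
  exact h i hxi hiy (mem_nzPos.mpr ⟨by omega, hnz⟩)

lemma F_Q0 {w : List ℕ} (h0 : 0 < K w) : F w (Q w 0) = 0 := by
  have := F_gap (w := w) (x := 0) (y := Q w 0) (Nat.zero_le _)
    (le_of_lt (Q_lt_len h0)) ?_
  · rw [this]; simp [F]
  · intro i _ hi hmem
    obtain ⟨t, ht, hQt⟩ := mem_nzPos_idx hmem
    have : Q w 0 ≤ Q w t := Q_mono_le (Nat.zero_le t) ht
    omega

lemma S_last {w : List ℕ} (h0 : 0 < K w) : Sv w (K w - 1) = w.sum := by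
  have hQ : Q w (K w - 1) < w.length := Q_lt_len (by omega)
  have := F_gap (w := w) (x := Q w (K w - 1) + 1) (y := w.length) (by omega) le_rfl ?_
  · rw [Sv, ← this, F_length]
  · intro i hxi _ hmem
    obtain ⟨t, ht, hQt⟩ := mem_nzPos_idx hmem
    have : Q w t ≤ Q w (K w - 1) := Q_mono_le (by omega) (by omega)
    omega

lemma F_Qsucc {w : List ℕ} {t : ℕ} (ht : t + 1 < K w) :
    F w (Q w (t + 1)) = Sv w t := by
  have hmono := Q_mono (s := t) (t := t + 1) (by omega) ht
  have := F_gap (w := w) (x := Q w t + 1) (y := Q w (t + 1)) (by omega)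
    (le_of_lt (Q_lt_len ht)) ?_
  · rw [this, Sv]
  · intro i hxi hiy hmem
    obtain ⟨s, hs, hQs⟩ := mem_nzPos_idx hmem
    rcases Nat.lt_or_ge s (t + 1) with h' | h'
    · have : Q w s ≤ Q w t := Q_mono_le (by omega) (by omega)
      omega
    · have : Q w (t + 1) ≤ Q w s := Q_mono_le h' hs
      omega

lemma S_succ {w : List ℕ} {t : ℕ} (ht : t + 1 < K w) :
    Sv w (t + 1) = Sv w t + w.getD (Q w (t + 1)) 0 := by
  rw [Sv, F_succ, F_Qsucc ht]

lemma S_pos {w : List ℕ} {t : ℕ} (ht : t < K w) : 1 ≤ Sv w t := by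
  have h1 := Q_nz ht
  have := F_succ w (Q w t)
  rw [← Sv] at this
  omega

lemma S_strict {w : List ℕ} {s t : ℕ} (hst : s < t) (ht : t < K w) :
    Sv w s < Sv w t := by
  have h1 : Q w s + 1 ≤ Q w t := Q_mono hst ht
  have h2 : F w (Q w s + 1) ≤ F w (Q w t) := F_mono w h1
  have h3 := F_succ w (Q w t)
  have h4 := Q_nz ht
  rw [← Sv] at h3
  rw [← Sv] at h2
  omega

lemma aFn_one {w : List ℕ} (h0 : 0 < K w) : aFn w 1 = Q w 0 := by
  apply aFn_eq_of w 1 (Q w 0) (Q_lt_len h0)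
  · rw [F_Q0 h0]; omega
  · have := F_succ w (Q w 0)
    have := Q_nz h0
    omega

lemma aFn_sum {w : List ℕ} (h0 : 0 < K w) : aFn w w.sum = Q w (K w - 1) := by
  have hS := S_last h0
  have hs : F w (Q w (K w - 1)) + w.getD (Q w (K w - 1)) 0 = w.sum := by
    rw [← hS, Sv, F_succ]
  have hnz := Q_nz (w := w) (t := K w - 1) (by omega)
  apply aFn_eq_of w _ _ (Q_lt_len (by omega)) (by omega)
  exact le_of_eq hS.symm

lemma aFn_S {w : List ℕ} {t : ℕ} (ht : t < K w) : aFn w (Sv w t) = Q w t := by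
  have hs := F_succ w (Q w t)
  have hnz := Q_nz ht
  apply aFn_eq_of w _ _ (Q_lt_len ht) (by show F w (Q w t) < F w (Q w t + 1); omega) le_rfl

lemma aFn_S1 {w : List ℕ} {t : ℕ} (ht : t + 1 < K w) :
    aFn w (Sv w t + 1) = Q w (t + 1) := by
  have h1 := F_Qsucc ht
  have h2 := S_succ ht
  have hnz := Q_nz ht
  have hnz1 := Q_nz (w := w) (t := t + 1) ht
  apply aFn_eq_of w _ _ (Q_lt_len ht)
  · omega
  · have : F w (Q w (t + 1) + 1) = Sv w (t + 1) := rfl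
    rw [this, h2]
    omega

lemma toNat_sum : ∀ (l : List ℤ), (∀ x ∈ l, 0 ≤ x) → ((l.map Int.toNat).sum : ℤ) = l.sum := by
  intro l
  induction l with
  | nil => simp
  | cons a l ih =>
    intro h
    simp only [List.map_cons, List.sum_cons, Nat.cast_add]
    rw [ih (fun x hx => h x (List.mem_cons_of_mem a hx))]
    have := h a List.mem_cons_self
    omega

lemma sum_map_range (g : ℕ → ℤ) (n : ℕ) :
    ((List.range n).map g).sum = ∑ i ∈ Finset.range n, g i := by
  induction n with
  | zero => simp
  | succ n ih => rw [List.range_succ, List.map_append, List.sum_append,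
      Finset.sum_range_succ, ih]; simp


lemma muN_getD_zero (a : ℤ) (l : List ℤ) :
    (((a :: l).map Int.toNat)).getD 0 0 = a.toNat := rfl

lemma muN_getD_succ (a : ℤ) (g : ℕ → ℤ) (n j : ℕ) (hj : j < n) :
    (((a :: (List.range n).map g).map Int.toNat)).getD (j + 1) 0 = (g j).toNat := by
  rw [List.map_cons, List.getD_cons_succ, List.map_map]
  rw [List.getD_eq_getElem _ _ (by simp [hj])]
  simp

end MuCompl

open MuCompl


/-- For `w ∈ Row(f,m)`, the vector
`μ = (f - a_m + a_1, a_2 - a_1, a_3 - a_2, …, a_m - a_{m-1})` has nonnegative entries,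
lies in `Row(m,f)`, and its cyclic class is the complement class `⟨w⟩ᶜ`. -/
theorem mu_is_complement (f m : ℕ) (hf : 1 ≤ f) (hm : 1 ≤ m)
    (w : List ℕ) (hlen : w.length = f) (hsum : w.sum = m)
    (μ : List ℤ)
    (hμ : μ = ((f : ℤ) - (aFn w m : ℤ) + (aFn w 1 : ℤ)) ::
      (List.range (m - 1)).map (fun j => (aFn w (j + 2) : ℤ) - (aFn w (j + 1) : ℤ))) :
    (∀ x ∈ μ, 0 ≤ x) ∧
    (μ.map Int.toNat).length = m ∧
    (μ.map Int.toNat).sum = f ∧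
    IsComplementOf w (μ.map Int.toNat) := by
  subst hlen
  subst hsum
  have hK : 1 ≤ K w := K_pos (by omega)
  have hmono12 : ∀ j, aFn w (j + 1) ≤ aFn w (j + 2) := fun j => aFn_mono w (by omega)
  have hQlast : Q w (K w - 1) < w.length := Q_lt_len (by omega)
  -- nonnegativity
  have hnonneg : ∀ x ∈ μ, 0 ≤ x := by
    rw [hμ]
    intro x hx
    rcases List.mem_cons.mp hx with h | h
    · subst h
      rw [aFn_sum (by omega), aFn_one (by omega)]
      omega
    · obtain ⟨j, hj, rfl⟩ := List.mem_map.mp h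
      have := hmono12 j
      omega
  -- length
  have hmlen : μ.length = w.sum := by
    rw [hμ]
    simp only [List.length_cons, List.length_map, List.length_range]
    omega
  -- entry values
  have hv0 : (μ.map Int.toNat).getD 0 0 = w.length - Q w (K w - 1) + Q w 0 := by
    rw [hμ, muN_getD_zero, aFn_sum (by omega), aFn_one (by omega)]
    omega
  have hvq : ∀ j, j + 1 < w.sum →
      (μ.map Int.toNat).getD (j + 1) 0 = aFn w (j + 2) - aFn w (j + 1) := by
    intro j hj
    rw [hμ, muN_getD_succ _ _ _ _ (by omega)]
    have := hmono12 j
    omega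
  -- value at S t
  have hSlt : ∀ t, t < K w - 1 → Sv w t < w.sum := by
    intro t ht
    have := S_strict (w := w) (s := t) (t := K w - 1) (by omega) (by omega)
    rw [S_last (by omega)] at this
    omega
  have hSval : ∀ t, t < K w - 1 →
      (μ.map Int.toNat).getD (Sv w t) 0 = Q w (t + 1) - Q w t := by
    intro t ht
    have hSpos := S_pos (w := w) (t := t) (by omega)
    have hslt := hSlt t ht
    have hj : Sv w t - 1 + 1 = Sv w t := by omega
    rw [← hj, hvq _ (by omega)]
    have e2 : Sv w t - 1 + 2 = Sv w t + 1 := by omega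
    rw [e2, hj, aFn_S (by omega), aFn_S1 (by omega)]
  -- the nonzero positions of μN
  haveI : IsAntisymm ℕ (· < ·) := ⟨fun a b h1 h2 => absurd h1 (by omega)⟩
  have hs2 : (0 :: (List.range (K w - 1)).map (Sv w)).Pairwise (· < ·) := by
    rw [List.pairwise_cons]
    constructor
    · intro b hb
      obtain ⟨t, ht, rfl⟩ := List.mem_map.mp hb
      rw [List.mem_range] at ht
      exact S_pos (by omega)
    · rw [List.pairwise_map, List.pairwise_iff_getElem]
      intro i j hi hj hij
      rw [List.length_range] at hi hj
      simp only [List.getElem_range]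
      exact S_strict hij (by omega)
  have hN : nzPos (μ.map Int.toNat) = 0 :: (List.range (K w - 1)).map (Sv w) := by
    apply List.Perm.eq_of_pairwise' (nzPos_pairwise _) hs2 ?_
    rw [List.perm_ext_iff_of_nodup
      ((nzPos_pairwise _).imp (fun h => ne_of_lt h))
      (hs2.imp (fun h => ne_of_lt h))]
    intro q
    rw [mem_nzPos]
    constructor
    · rintro ⟨hqlt, hqnz⟩
      rw [List.length_map, hmlen] at hqlt
      cases q with
      | zero => exact List.mem_cons_self
      | succ j =>
        rw [hvq j hqlt] at hqnz
        have hlt : aFn w (j + 1) < aFn w (j + 2) := by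
          have := hmono12 j
          omega
        obtain ⟨haf, hF1, hF2, hnz⟩ := aFn_spec w (j + 1) (by omega) (by omega) (by omega)
        obtain ⟨t, ht, hQt⟩ := mem_nzPos_idx (mem_nzPos.mpr ⟨haf, hnz⟩)
        have hFeq : F w (aFn w (j + 1) + 1) = j + 1 := by
          by_contra hne
          have := aFn_eq_of w (j + 2) _ haf (by omega) (by omega)
          omega
        have hSt : Sv w t = j + 1 := by rw [Sv, hQt, hFeq]
        have htK : t < K w - 1 := by
          by_contra h
          have het : t = K w - 1 := by omega
          rw [het, S_last (by omega)] at hSt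
          omega
        exact List.mem_cons_of_mem _ (List.mem_map.mpr ⟨t, List.mem_range.mpr htK, hSt⟩)
    · intro hq
      rcases List.mem_cons.mp hq with rfl | hq
      · refine ⟨by rw [List.length_map, hmlen]; omega, ?_⟩
        rw [hv0]
        omega
      · obtain ⟨t, ht, rfl⟩ := List.mem_map.mp hq
        rw [List.mem_range] at ht
        refine ⟨by rw [List.length_map, hmlen]; exact hSlt t ht, ?_⟩
        rw [hSval t ht]
        have := Q_mono (w := w) (s := t) (t := t + 1) (by omega) (by omega)
        omega
  have hNlen : (nzPos (μ.map Int.toNat)).length = K w := by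
    rw [hN]
    simp only [List.length_cons, List.length_map, List.length_range]
    omega
  have hN0 : (nzPos (μ.map Int.toNat)).getD 0 0 = 0 := by rw [hN]; rfl
  have hNs : ∀ t, t < K w - 1 → (nzPos (μ.map Int.toNat)).getD (t + 1) 0 = Sv w t := by
    intro t ht
    rw [hN, List.getD_cons_succ]
    have hb : t < (List.map (Sv w) (List.range (K w - 1))).length := by
      simp only [List.length_map, List.length_range]
      omega
    rw [List.getD_eq_getElem _ _ hb]
    simp
  -- sum of μN
  have hμsum : (μ.map Int.toNat).sum = w.length := by
    have h1 := toNat_sum μ hnonneg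
    have h3 : ∑ j ∈ Finset.range (w.sum - 1), ((aFn w (j + 2) : ℤ) - (aFn w (j + 1) : ℤ))
        = (aFn w (w.sum - 1 + 1) : ℤ) - (aFn w (0 + 1) : ℤ) := by
      rw [← Finset.sum_range_sub (fun i => (aFn w (i + 1) : ℤ)) (w.sum - 1)]
    have h2 : μ.sum = (w.length : ℤ) := by
      rw [hμ, List.sum_cons, sum_map_range]
      rw [h3]
      have e : w.sum - 1 + 1 = w.sum := by omega
      rw [e]
      norm_num
    rw [h2] at h1
    exact_mod_cast h1
  -- lengths of pair lists
  have hLlen : (pairsOf w).length = K w := by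
    simp [pairsOf, K]
  have hLget : ∀ t, t < K w → (pairsOf w).getD t (0, 0) =
      (w.getD (Q w t) 0,
        if t + 1 = K w then Q w 0 + w.length - Q w t else Q w (t + 1) - Q w t) := by
    intro t ht
    rw [List.getD_eq_getElem _ _ (by rw [hLlen]; exact ht)]
    simp only [pairsOf, List.getElem_map, List.getElem_range]
    rfl
  have hclen : (complPairs (pairsOf w)).length = K w := by
    simp [complPairs, hLlen]
  have hRget : ∀ r, r < K w → (complPairs (pairsOf w)).getD r (0, 0) =
      (((pairsOf w).getD r (0, 0)).2, ((pairsOf w).getD ((r + 1) % K w) (0, 0)).1) := by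
    intro r hr
    rw [List.getD_eq_getElem _ _ (by rw [hclen]; exact hr)]
    simp only [complPairs, List.getElem_zip, List.getElem_map, List.getElem_rotate,
      List.length_map, hLlen]
    rw [List.getD_eq_getElem _ _ (by rw [hLlen]; exact hr),
      List.getD_eq_getElem _ _ (by rw [hLlen]; exact Nat.mod_lt _ (by omega))]
  have hRrot : ∀ i (h : i < ((complPairs (pairsOf w)).rotate (K w - 1)).length),
      ((complPairs (pairsOf w)).rotate (K w - 1))[i] =
      (complPairs (pairsOf w)).getD ((i + (K w - 1)) % K w) (0, 0) := by
    intro i h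
    rw [List.getElem_rotate]
    simp only [hclen]
    rw [List.getD_eq_getElem _ _ (by rw [hclen]; exact Nat.mod_lt _ (by omega))]
  have hμNlen : (μ.map Int.toNat).length = w.sum := by rw [List.length_map, hmlen]
  have hc0 : Sv w 0 = w.getD (Q w 0) 0 := by
    have h1 := F_succ w (Q w 0)
    have h2 := F_Q0 (w := w) (by omega)
    show F w (Q w 0 + 1) = _
    omega
  have hrot : pairsOf (μ.map Int.toNat) = (complPairs (pairsOf w)).rotate (K w - 1) := by
    apply List.ext_getElem
    · rw [List.length_rotate, hclen]
      simp only [pairsOf, List.length_map, List.length_range, hNlen]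
    · intro i h1 h2
      have hiK : i < K w := by
        simpa only [pairsOf, List.length_map, List.length_range, hNlen] using h1
      rw [hRrot i h2]
      cases i with
      | zero =>
        have hr : (0 + (K w - 1)) % K w = K w - 1 := by
          rw [Nat.zero_add]; exact Nat.mod_eq_of_lt (by omega)
        have hr2 : (K w - 1 + 1) % K w = 0 := by
          have e : K w - 1 + 1 = K w := by omega
          rw [e, Nat.mod_self]
        rw [hr, hRget _ (by omega), hr2, hLget _ (by omega), hLget 0 (by omega)]
        simp only [pairsOf, List.getElem_map, List.getElem_range, hNlen, hμNlen]
        rw [Prod.mk.injEq]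
        constructor
        · rw [hN0, hv0, if_pos (show K w - 1 + 1 = K w by omega)]
          omega
        · by_cases hK1 : 0 + 1 = K w
          · rw [if_pos hK1, hN0]
            have hslast := S_last (w := w) (by omega)
            rw [show K w - 1 = 0 by omega] at hslast
            omega
          · rw [if_neg hK1, hN0, hNs 0 (by omega)]
            omega
      | succ t =>
        have hr : (t + 1 + (K w - 1)) % K w = t := by
          have e : t + 1 + (K w - 1) = t + K w := by omega
          rw [e, Nat.add_mod_right]
          exact Nat.mod_eq_of_lt (by omega)
        have hr2 : (t + 1) % K w = t + 1 := Nat.mod_eq_of_lt hiK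
        rw [hr, hRget t (by omega), hr2, hLget t (by omega), hLget (t + 1) hiK]
        simp only [pairsOf, List.getElem_map, List.getElem_range, hNlen, hμNlen]
        rw [hNs t (by omega)]
        rw [Prod.mk.injEq]
        constructor
        · rw [if_neg (show ¬ (t + 1 = K w) by omega)]
          exact hSval t (by omega)
        · have hSsucc := S_succ (w := w) (t := t) hiK
          by_cases h2K : t + 1 + 1 = K w
          · rw [if_pos h2K, hN0]
            have hslast := S_last (w := w) (by omega)
            rw [show K w - 1 = t + 1 by omega] at hslast
            omega
          · rw [if_neg h2K, hNs (t + 1) (by omega)]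
            have hSsucc2 := S_succ (w := w) (t := t + 1) (by omega)
            omega
  refine ⟨hnonneg, by rw [List.length_map, hmlen], hμsum, ?_⟩
  refine ⟨hμNlen, hμsum, ?_⟩
  exact (List.IsRotated.symm ⟨K w - 1, hrot.symm⟩)
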